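/- For every finite coloring ℕ = C₁ ∪ … ∪ C_r there exist an index i and natural numbers a, b ≥ 2 with {a, b, b^a} ⊆ C_i. -/

import Mathlib

open scoped Classical

noncomputable def upperDensity (A : Set ℕ) : ℝ :=
  Filter.limsup (fun n => (((Finset.Icc 1 n).filter (fun m => m ∈ A)).card : ℝ) / n) Filter.atTop

noncomputable def lowerDensity (A : Set ℕ) : ℝ :=
  Filter.liminf (fun n => (((Finset.Icc 1 n).filter (fun m => m ∈ A)).card : ℝ) / n) Filter.atTop

/-- The difference set Δ(X) = {x' - x : x, x' ∈ X, x' > x}. -/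
def diffSet (X : Set ℕ) : Set ℕ := {d | ∃ x ∈ X, ∃ x' ∈ X, x < x' ∧ x' - x = d}

/-- A is thick if it contains arbitrarily long intervals of consecutive integers. -/
def Thick (A : Set ℕ) : Prop := ∀ k : ℕ, ∃ a : ℕ, ∀ i < k, a + i ∈ A

/-- A is a Δ-set if it contains the difference set of some infinite X. -/
def IsDeltaSet (A : Set ℕ) : Prop := ∃ X : Set ℕ, X.Infinite ∧ diffSet X ⊆ A

section SahasrabudheProof

open Finset

lemma ramsey_core {r : ℕ} (hr : 0 < r) :
    ∀ (n : ℕ) (f : Fin r → ℕ), Finset.univ.sum f = n →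
    ∃ N : ℕ, ∀ (χ : ℕ → ℕ → Fin r) (Y : Finset ℕ), N ≤ Y.card →
      ∃ (c : Fin r) (W : Finset ℕ), W ⊆ Y ∧ f c ≤ W.card ∧
        ∀ a ∈ W, ∀ b ∈ W, a < b → χ a b = c := by
  intro n
  induction n using Nat.strong_induction_on with
  | _ n ih =>
    intro f hf
    by_cases h0 : ∃ c, f c = 0
    · obtain ⟨c, hc⟩ := h0
      exact ⟨0, fun χ Y _ => ⟨c, ∅, by simp [hc]⟩⟩
    · push_neg at h0
      have h1 : ∀ c, 1 ≤ f c := fun c => Nat.one_le_iff_ne_zero.2 (h0 c)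
      -- recursive bounds
      have hrec : ∀ c : Fin r, ∃ N : ℕ, ∀ (χ : ℕ → ℕ → Fin r) (Y : Finset ℕ), N ≤ Y.card →
          ∃ (c' : Fin r) (W : Finset ℕ), W ⊆ Y ∧ (Function.update f c (f c - 1)) c' ≤ W.card ∧
            ∀ a ∈ W, ∀ b ∈ W, a < b → χ a b = c' := by
        intro c
        have hsum : Finset.univ.sum (Function.update f c (f c - 1)) = n - 1 := by
          have := Finset.sum_update_of_mem (Finset.mem_univ c) (f := f) (b := f c - 1)
          rw [this]
          have : Finset.univ.sum f = f c + ∑ x ∈ Finset.univ \ {c}, f x := by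
            rw [Finset.sum_eq_add_sum_sdiff_singleton_of_mem (Finset.mem_univ c)]
          have h1c := h1 c
          omega
        have hn1 : n - 1 < n := by
          have : 1 ≤ n := by
            calc 1 ≤ f ⟨0, hr⟩ := h1 _
            _ ≤ Finset.univ.sum f := Finset.single_le_sum (fun _ _ => Nat.zero_le _) (Finset.mem_univ _)
            _ = n := hf
          omega
        exact ih (n-1) hn1 _ hsum
      choose N hN using hrec
      refine ⟨Finset.univ.sum N + r + 1, fun χ Y hY => ?_⟩
      have hYne : Y.Nonempty := Finset.card_pos.1 (by omega)
      set y₀ := Y.min' hYne with hy₀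
      have hy₀Y : y₀ ∈ Y := Y.min'_mem hYne
      set R := Y.erase y₀ with hR
      have hRcard : Finset.univ.sum N + r ≤ R.card := by
        rw [hR, Finset.card_erase_of_mem hy₀Y]; omega
      -- fiberwise count
      have hfib : R.card = Finset.univ.sum (fun c => (R.filter (fun z => χ y₀ z = c)).card) :=
        Finset.card_eq_sum_card_fiberwise (fun x _ => Finset.mem_univ (χ y₀ x))
      have hex : ∃ c, N c + 1 ≤ (R.filter (fun z => χ y₀ z = c)).card := by
        by_contra hco
        push_neg at hco
        have : R.card ≤ Finset.univ.sum N := by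
          rw [hfib]
          exact Finset.sum_le_sum (fun c _ => by have := hco c; omega)
        omega
      obtain ⟨c, hc⟩ := hex
      set Y' := R.filter (fun z => χ y₀ z = c) with hY'
      obtain ⟨c', W', hW'sub, hW'card, hW'mono⟩ := hN c χ Y' (by omega)
      by_cases hcc : c' = c
      · subst hcc
        refine ⟨c', insert y₀ W', ?_, ?_, ?_⟩
        · intro a ha
          rcases Finset.mem_insert.1 ha with rfl | ha
          · exact hy₀Y
          · exact (Finset.erase_subset _ _) ((Finset.filter_subset _ _) (hW'sub ha))
        · have hy₀W' : y₀ ∉ W' := by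
            intro hmem
            have := hW'sub hmem
            rw [hY'] at this
            exact (Finset.ne_of_mem_erase (Finset.mem_of_mem_filter _ this)) rfl
          rw [Finset.card_insert_of_notMem hy₀W']
          have := hW'card
          rw [Function.update_self] at this
          have := h1 c'
          omega
        · intro a ha b hb hab
          rcases Finset.mem_insert.1 ha with rfl | ha
          · rcases Finset.mem_insert.1 hb with rfl | hb
            · omega
            · have := hW'sub hb
              rw [hY'] at this
              exact (Finset.mem_filter.1 this).2
          · rcases Finset.mem_insert.1 hb with rfl | hb
            · -- a < y₀ impossible: y₀ is min, a ∈ Y, a ≠ y₀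
              exfalso
              have haY : a ∈ Y := (Finset.erase_subset _ _) ((Finset.filter_subset _ _) (hW'sub ha))
              have := Y.min'_le a haY
              omega
            · exact hW'mono a ha b hb hab
      · refine ⟨c', W', ?_, ?_, hW'mono⟩
        · intro a ha
          exact (Finset.erase_subset _ _) ((Finset.filter_subset _ _) (hW'sub ha))
        · have := hW'card
          rwa [Function.update_of_ne hcc] at this

lemma ramsey_pairs {r : ℕ} (hr : 0 < r) (q : ℕ) :
    ∃ N : ℕ, ∀ (χ : ℕ → ℕ → Fin r) (Y : Finset ℕ), N ≤ Y.card →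
      ∃ (c : Fin r) (W : Finset ℕ), W ⊆ Y ∧ q ≤ W.card ∧
        ∀ a ∈ W, ∀ b ∈ W, a < b → χ a b = c := by
  obtain ⟨N, hN⟩ := ramsey_core hr (Finset.univ.sum (fun _ : Fin r => q)) (fun _ => q) rfl
  exact ⟨N, fun χ Y hY => hN χ Y hY⟩

lemma lineA {r : ℕ} (g : ℕ → Fin r)
    (H : ∀ x y : ℕ, 1 ≤ x → 1 ≤ y → ¬(g x = g y ∧ g y = g (y * 2^x)))
    (i : Fin r) (Y : Finset ℕ) (hY : ∀ a ∈ Y, ∀ b ∈ Y, a < b → g (b - a) = i)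
    (u A L : ℕ) (hu : 1 ≤ u) :
    ((Finset.Ico A (A+L)).filter (fun e => g (u * 2^e) = i)).card * Y.card
      ≤ L + Y.sup id := by
  classical
  set F := (Finset.Ico A (A+L)).filter (fun e => g (u * 2^e) = i) with hF
  have key : ∀ p q : ℕ × ℕ, p ∈ F ×ˢ Y → q ∈ F ×ˢ Y → p.1 + p.2 = q.1 + q.2 →
      p.2 < q.2 → False := by
    intro p q hp hq heq hlt
    obtain ⟨hp1, hp2⟩ := Finset.mem_product.1 hp
    obtain ⟨hq1, hq2⟩ := Finset.mem_product.1 hq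
    have hgp : g (u * 2^p.1) = i := (Finset.mem_filter.1 hp1).2
    have hgq : g (u * 2^q.1) = i := (Finset.mem_filter.1 hq1).2
    have hx : g (q.2 - p.2) = i := hY p.2 hp2 q.2 hq2 hlt
    have hq1p1 : q.1 < p.1 := by omega
    have hsum : q.1 + (q.2 - p.2) = p.1 := by omega
    refine H (q.2 - p.2) (u * 2^q.1) (by omega) (Nat.one_le_iff_ne_zero.2 (by positivity)) ⟨?_, ?_⟩
    · rw [hx, hgq]
    · rw [hgq]
      have : u * 2^q.1 * 2^(q.2 - p.2) = u * 2^p.1 := by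
        rw [mul_assoc, ← pow_add, hsum]
      rw [this, hgp]
  have hinj : Set.InjOn (fun p : ℕ × ℕ => p.1 + p.2) ((F ×ˢ Y) : Finset (ℕ × ℕ)) := by
    intro p hp q hq heq
    have hp' : p ∈ F ×ˢ Y := hp
    have hq' : q ∈ F ×ˢ Y := hq
    have heq' : p.1 + p.2 = q.1 + q.2 := heq
    rcases lt_trichotomy p.2 q.2 with h | h | h
    · exact absurd (key p q hp' hq' heq' h) (by simp)
    · have : p.1 = q.1 := by omega
      exact Prod.ext this h
    · exact absurd (key q p hq' hp' heq'.symm h) (by simp)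
  have hmaps : ∀ p ∈ F ×ˢ Y, p.1 + p.2 ∈ Finset.Ico A (A + L + Y.sup id) := by
    intro p hp
    obtain ⟨hp1, hp2⟩ := Finset.mem_product.1 hp
    have h1 := Finset.mem_Ico.1 (Finset.mem_filter.1 hp1).1
    have h2 : p.2 ≤ Y.sup id := Finset.le_sup (f := id) hp2
    exact Finset.mem_Ico.2 ⟨by omega, by omega⟩
  have hcard := Finset.card_le_card_of_injOn _ hmaps hinj
  rw [Finset.card_product] at hcard
  calc F.card * Y.card ≤ (Finset.Ico A (A + L + Y.sup id)).card := hcard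
  _ = L + Y.sup id := by rw [Nat.card_Ico]; omega

lemma countStep {r : ℕ} (g : ℕ → Fin r) (Rich : Fin r → Prop) [DecidablePred Rich]
    (K T : ℕ)
    (PB : ∀ u A Λ' : ℕ, 1 ≤ u →
      ((Finset.Ico A (A+Λ')).filter (fun e => Rich (g (u * 2^e)))).card * K ≤ r * (Λ' + T))
    (E Λ M D j : ℕ) (σ : ℕ → ℕ)
    (hΛE : Λ ≤ E)
    (hD : ∀ a ∈ Finset.range (j+1), σ a ≤ D * 2^(E-Λ))
    (hnum : (j+1) * ((M + D) * (r * (Λ + T))) < Λ * M * K) :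
    ∃ e, E - Λ ≤ e ∧ e < E ∧ ∃ m, 1 ≤ m ∧
      ∀ a ∈ Finset.range (j+1), ¬ Rich (g ((m + σ a / 2^e) * 2^e)) := by
  classical
  set W := Finset.Ico (E-Λ) E with hW
  set Grid := W ×ˢ Finset.Icc 1 M with hGrid
  set Bad := Grid.filter (fun p : ℕ × ℕ =>
    ∃ a ∈ Finset.range (j+1), Rich (g ((p.2 + σ a / 2^(p.1)) * 2^(p.1)))) with hBad
  set RichPairs := (W ×ˢ Finset.Icc 1 (M+D)).filter
    (fun p : ℕ × ℕ => Rich (g (p.2 * 2^(p.1)))) with hRP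
  have hWmem : ∀ e ∈ W, E - Λ ≤ e ∧ e < E := fun e he => Finset.mem_Ico.1 he
  have hdle : ∀ a ∈ Finset.range (j+1), ∀ e ∈ W, σ a / 2^e ≤ D := by
    intro a ha e he
    have h1 : σ a ≤ D * 2^e := by
      refine le_trans (hD a ha) ?_
      exact Nat.mul_le_mul_left D (Nat.pow_le_pow_right (by norm_num) (hWmem e he).1)
    calc σ a / 2^e ≤ (D * 2^e) / 2^e := Nat.div_le_div_right h1
    _ = D := Nat.mul_div_cancel D (Nat.pow_pos (by norm_num))
  have hBa : ∀ a ∈ Finset.range (j+1),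
      (Grid.filter (fun p : ℕ × ℕ => Rich (g ((p.2 + σ a / 2^(p.1)) * 2^(p.1))))).card
        ≤ RichPairs.card := by
    intro a ha
    apply Finset.card_le_card_of_injOn (fun p => (p.1, p.2 + σ a / 2^(p.1)))
    · intro p hp
      obtain ⟨hpg, hpr⟩ := Finset.mem_filter.1 hp
      obtain ⟨hp1, hp2⟩ := Finset.mem_product.1 hpg
      have hm := Finset.mem_Icc.1 hp2
      refine Finset.mem_filter.2 ⟨Finset.mem_product.2 ⟨hp1, Finset.mem_Icc.2
        ⟨le_trans hm.1 (Nat.le_add_right _ _), Nat.add_le_add hm.2 (hdle a ha p.1 hp1)⟩⟩, hpr⟩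
    · intro p hp q hq heq
      have heq' : (p.1, p.2 + σ a / 2^(p.1)) = (q.1, q.2 + σ a / 2^(q.1)) := heq
      injection heq' with h1 h2
      rw [h1] at h2
      exact Prod.ext h1 (Nat.add_right_cancel h2)
  have hBadle : Bad.card ≤ (j+1) * RichPairs.card := by
    have hsub : Bad ⊆ (Finset.range (j+1)).biUnion (fun a =>
        Grid.filter (fun p : ℕ × ℕ => Rich (g ((p.2 + σ a / 2^(p.1)) * 2^(p.1))))) := by
      intro p hp
      obtain ⟨hpg, a, ha, hra⟩ := Finset.mem_filter.1 hp
      exact Finset.mem_biUnion.2 ⟨a, ha, Finset.mem_filter.2 ⟨hpg, hra⟩⟩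
    calc Bad.card ≤ _ := Finset.card_le_card hsub
    _ ≤ ∑ a ∈ Finset.range (j+1), (Grid.filter (fun p : ℕ × ℕ =>
          Rich (g ((p.2 + σ a / 2^(p.1)) * 2^(p.1))))).card := Finset.card_biUnion_le
    _ ≤ ∑ _a ∈ Finset.range (j+1), RichPairs.card := Finset.sum_le_sum hBa
    _ = (j+1) * RichPairs.card := by rw [Finset.sum_const, Finset.card_range, smul_eq_mul]
  have hRPfib : RichPairs.card = ∑ m ∈ Finset.Icc 1 (M+D),
      (W.filter (fun e => Rich (g (m * 2^e)))).card := by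
    rw [hRP, Finset.card_filter, Finset.sum_product, Finset.sum_comm]
    congr 1
    funext m
    rw [Finset.card_filter]
  have hRPle : RichPairs.card * K ≤ (M+D) * (r * (Λ + T)) := by
    rw [hRPfib, Finset.sum_mul]
    calc ∑ m ∈ Finset.Icc 1 (M+D), (W.filter (fun e => Rich (g (m * 2^e)))).card * K
        ≤ ∑ m ∈ Finset.Icc 1 (M+D), r * (Λ + T) := by
          refine Finset.sum_le_sum (fun m hm => ?_)
          have h1m : 1 ≤ m := (Finset.mem_Icc.1 hm).1
          have hPB := PB m (E-Λ) Λ h1m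
          have hWE : Finset.Ico (E-Λ) (E-Λ+Λ) = W := by rw [hW]; congr 1; omega
          rwa [hWE] at hPB
    _ = (M+D) * (r * (Λ + T)) := by
          rw [Finset.sum_const, Nat.card_Icc, smul_eq_mul]
          have h : M + D + 1 - 1 = M + D := by omega
          rw [h]
  have hGridcard : Grid.card = Λ * M := by
    rw [hGrid, Finset.card_product, hW, Nat.card_Ico, Nat.card_Icc]
    have h1 : E - (E - Λ) = Λ := by omega
    have h2 : M + 1 - 1 = M := by omega
    rw [h1, h2]
  have hlt : Bad.card < Grid.card := by
    have h1 : Bad.card * K ≤ (j+1) * RichPairs.card * K :=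
      Nat.mul_le_mul_right K hBadle
    have h2 : (j+1) * RichPairs.card * K ≤ (j+1) * ((M + D) * (r * (Λ + T))) := by
      rw [mul_assoc]
      exact Nat.mul_le_mul_left (j+1) hRPle
    have h3 : Bad.card * K < Grid.card * K := by
      rw [hGridcard]
      calc Bad.card * K ≤ _ := le_trans h1 h2
      _ < Λ * M * K := hnum
    exact Nat.lt_of_mul_lt_mul_right h3
  have hgood : ∃ p ∈ Grid, p ∉ Bad := by
    by_contra hco
    push_neg at hco
    have hsub : Grid ⊆ Bad := fun p hp => hco p hp
    have := Finset.card_le_card hsub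
    omega
  obtain ⟨p, hpG, hpB⟩ := hgood
  obtain ⟨hp1, hp2⟩ := Finset.mem_product.1 hpG
  have he := hWmem p.1 hp1
  refine ⟨p.1, he.1, he.2, p.2, (Finset.mem_Icc.1 hp2).1, ?_⟩
  intro a ha hra
  exact hpB (Finset.mem_filter.2 ⟨hpG, a, ha, hra⟩)

lemma PBlemma {r : ℕ} (g : ℕ → Fin r)
    (H : ∀ x y : ℕ, 1 ≤ x → 1 ≤ y → ¬(g x = g y ∧ g y = g (y * 2^x)))
    (Rich : Fin r → Prop) [DecidablePred Rich] (K T : ℕ)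
    (hYw : ∀ i, Rich i → ∃ Y : Finset ℕ,
      (∀ a ∈ Y, ∀ b ∈ Y, a < b → g (b - a) = i) ∧ K ≤ Y.card ∧ Y.sup id ≤ T) :
    ∀ u A L : ℕ, 1 ≤ u →
      ((Finset.Ico A (A+L)).filter (fun e => Rich (g (u * 2^e)))).card * K ≤ r * (L + T) := by
  classical
  intro u A L hu
  set S := (Finset.Ico A (A+L)).filter (fun e => Rich (g (u * 2^e))) with hS
  have hfib : S.card = ∑ i ∈ Finset.univ.filter Rich,
      (S.filter (fun e => g (u * 2^e) = i)).card := by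
    apply Finset.card_eq_sum_card_fiberwise (f := fun e => g (u * 2^e))
    intro e he
    exact Finset.mem_filter.2 ⟨Finset.mem_univ _, (Finset.mem_filter.1 he).2⟩
  have hper : ∀ i ∈ Finset.univ.filter Rich,
      (S.filter (fun e => g (u * 2^e) = i)).card * K ≤ L + T := by
    intro i hi
    obtain ⟨Y, hcl, hKle, hsup⟩ := hYw i (Finset.mem_filter.1 hi).2
    have hsub : S.filter (fun e => g (u * 2^e) = i)
        ⊆ (Finset.Ico A (A+L)).filter (fun e => g (u * 2^e) = i) := by
      intro e he
      have h1 := Finset.mem_filter.1 he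
      have h2 := Finset.mem_filter.1 h1.1
      exact Finset.mem_filter.2 ⟨h2.1, h1.2⟩
    calc (S.filter (fun e => g (u * 2^e) = i)).card * K
        ≤ (S.filter (fun e => g (u * 2^e) = i)).card * Y.card :=
          Nat.mul_le_mul_left _ hKle
    _ ≤ ((Finset.Ico A (A+L)).filter (fun e => g (u * 2^e) = i)).card * Y.card :=
          Nat.mul_le_mul_right _ (Finset.card_le_card hsub)
    _ ≤ L + Y.sup id := lineA g H i Y hcl u A L hu
    _ ≤ L + T := by omega
  calc S.card * K = (∑ i ∈ Finset.univ.filter Rich,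
        (S.filter (fun e => g (u * 2^e) = i)).card) * K := by rw [hfib]
  _ = ∑ i ∈ Finset.univ.filter Rich,
        (S.filter (fun e => g (u * 2^e) = i)).card * K := Finset.sum_mul _ _ _
  _ ≤ ∑ _i ∈ Finset.univ.filter Rich, (L + T) := Finset.sum_le_sum hper
  _ = (Finset.univ.filter Rich).card * (L + T) := by rw [Finset.sum_const, smul_eq_mul]
  _ ≤ r * (L + T) := by
      apply Nat.mul_le_mul_right
      calc (Finset.univ.filter Rich).card ≤ Finset.univ.card := Finset.card_filter_le _ _
      _ = r := by rw [Finset.card_univ, Fintype.card_fin]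

theorem keyW {r : ℕ} (g : ℕ → Fin r)
    (H : ∀ x y : ℕ, 1 ≤ x → 1 ≤ y → ¬(g x = g y ∧ g y = g (y * 2^x))) : False := by
  classical
  rcases Nat.eq_zero_or_pos r with hr0 | hr
  · subst hr0; exact (g 1).elim0
  set Rich : Fin r → Prop := fun i => ∀ K : ℕ, ∃ Y : Finset ℕ,
      (∀ a ∈ Y, ∀ b ∈ Y, a < b → g (b - a) = i) ∧ K ≤ Y.card with hRich
  letI : DecidablePred Rich := Classical.decPred _
  have hpoorEx : ∀ i : Fin r, ∃ Q : ℕ, ¬ Rich i →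
      (∀ Y : Finset ℕ, (∀ a ∈ Y, ∀ b ∈ Y, a < b → g (b - a) = i) → Y.card < Q) := by
    intro i
    by_cases h : Rich i
    · exact ⟨0, fun h' => absurd h h'⟩
    · simp only [hRich] at h
      push_neg at h
      obtain ⟨Q, hQ⟩ := h
      exact ⟨Q, fun _ Y hY => hQ Y hY⟩
  choose Qf hQf using hpoorEx
  set q := max 2 (Finset.univ.sup Qf) with hq
  obtain ⟨Nram, hNram⟩ := ramsey_pairs hr q
  set k := Nram + 1 with hk
  set K := 4 * r * k + 1 with hK
  have hYw0 : ∀ i : Fin r, ∃ Y : Finset ℕ, Rich i →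
      ((∀ a ∈ Y, ∀ b ∈ Y, a < b → g (b - a) = i) ∧ K ≤ Y.card) := by
    intro i
    by_cases h : Rich i
    · obtain ⟨Y, h1, h2⟩ := h K
      exact ⟨Y, fun _ => ⟨h1, h2⟩⟩
    · exact ⟨∅, fun h' => absurd h' h⟩
  choose Yf hYf using hYw0
  set T := Finset.univ.sup (fun i => (Yf i).sup id) with hT
  set Λ := T + 1 with hΛ
  have hYw : ∀ i, Rich i → ∃ Y : Finset ℕ,
      (∀ a ∈ Y, ∀ b ∈ Y, a < b → g (b - a) = i) ∧ K ≤ Y.card ∧ Y.sup id ≤ T := by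
    intro i hi
    exact ⟨Yf i, (hYf i hi).1, (hYf i hi).2,
      Finset.le_sup (f := fun i => (Yf i).sup id) (Finset.mem_univ i)⟩
  have PB := PBlemma g H Rich K T hYw
  have CONS : ∀ j : ℕ, j ≤ k → ∃ (v : ℕ → ℕ) (E : ℕ),
      (∀ i, k - j ≤ i → i < k → 1 ≤ v i) ∧
      (∀ a b : ℕ, k - j ≤ a → a < b → b ≤ k → ¬ Rich (g (∑ i ∈ Finset.Ico a b, v i))) ∧
      ((k - j) * Λ + 1 ≤ E) ∧
      (∀ b : ℕ, b ≤ k → 2^E ∣ ∑ i ∈ Finset.Ico (k - j) b, v i) := by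
    intro j
    induction j with
    | zero =>
      intro _
      refine ⟨fun _ => 0, k * Λ + 1, ?_, ?_, by simp, ?_⟩
      · intro i h1 h2; exact absurd h2 (by omega)
      · intro a b h1 h2 h3; exact absurd h3 (by omega)
      · intro b hb
        rw [Finset.Ico_eq_empty (by omega), Finset.sum_empty]
        exact dvd_zero _
    | succ j ih =>
      intro hj1
      obtain ⟨v, E, hpos, hclique, hE, hdvd⟩ := ih (by omega)
      have hkj1 : 1 ≤ k - j := by omega
      have hΛE : Λ ≤ E := by
        have h1 : 1 * Λ ≤ (k - j) * Λ := Nat.mul_le_mul_right Λ hkj1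
        omega
      set σ : ℕ → ℕ := fun a => ∑ i ∈ Finset.Ico (k - j) (k - j + a), v i with hσ
      set tot : ℕ := ∑ i ∈ Finset.Ico (k - j) k, v i with htot
      set Dtot : ℕ := tot / 2^(E - Λ) + 1 with hDtot
      set M := Dtot + 1 with hM
      have hDb : ∀ a ∈ Finset.range (j+1), σ a ≤ Dtot * 2^(E-Λ) := by
        intro a ha
        have h1 : σ a ≤ tot := by
          rw [hσ, htot]
          apply Finset.sum_le_sum_of_subset
          apply Finset.Ico_subset_Ico (le_refl _)
          have := Finset.mem_range.1 ha
          omega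
        have hPpos : 0 < 2^(E-Λ) := Nat.pow_pos (by norm_num)
        have h2 := Nat.div_add_mod tot (2^(E-Λ))
        have h3 := Nat.mod_lt tot hPpos
        have h4 : Dtot * 2^(E-Λ) = 2^(E-Λ) * (tot / 2^(E-Λ)) + 2^(E-Λ) := by
          rw [hDtot]; ring
        omega
      have hnum : (j+1) * ((M + Dtot) * (r * (Λ + T))) < Λ * M * K := by
        have e1 : M + Dtot = 2*Dtot + 1 := by omega
        have step1 : r * (Λ + T) ≤ r * (2*Λ) := Nat.mul_le_mul_left r (by omega)
        have step2 : (M + Dtot) * (r * (Λ + T)) ≤ (2*Dtot+1) * (r * (2*Λ)) := by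
          rw [e1]; exact Nat.mul_le_mul_left _ step1
        have step3 : (j+1) * ((M + Dtot) * (r * (Λ + T))) ≤ k * ((2*Dtot+1) * (r * (2*Λ))) :=
          Nat.mul_le_mul (by omega) step2
        refine lt_of_le_of_lt step3 ?_
        have lhs_eq : k * ((2*Dtot+1) * (r * (2*Λ))) = (4*(r*k*Dtot) + 2*(r*k)) * Λ := by ring
        have rhs_eq : Λ * M * K = (4*(r*k*Dtot) + (4*(r*k) + Dtot + 1)) * Λ := by
          rw [hM, hK]; ring
        rw [lhs_eq, rhs_eq]
        have hΛpos : 0 < Λ := by omega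
        have hmono2 : 2*(r*k) ≤ 4*(r*k) := Nat.mul_le_mul_right (r*k) (by norm_num)
        have inner : 4*(r*k*Dtot) + 2*(r*k) < 4*(r*k*Dtot) + (4*(r*k) + Dtot + 1) := by omega
        exact Nat.mul_lt_mul_of_lt_of_le inner (le_refl Λ) hΛpos
      obtain ⟨e, he1, he2, m, hm, hgood⟩ := countStep g Rich K T PB E Λ M Dtot j σ hΛE hDb hnum
      set i₀ := k - (j+1) with hi₀
      have hi₀1 : i₀ + 1 = k - j := by omega
      set x := m * 2^e with hx
      set v' := Function.update v i₀ x with hv'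
      have hupd : ∀ a b : ℕ, k - j ≤ a → (∑ i ∈ Finset.Ico a b, v' i) = ∑ i ∈ Finset.Ico a b, v i := by
        intro a b ha
        apply Finset.sum_congr rfl
        intro i hi
        have := (Finset.mem_Ico.1 hi).1
        rw [hv']
        apply Function.update_of_ne
        omega
      have hxpos : 1 ≤ x := by
        rw [hx]
        calc 1 ≤ m := hm
        _ ≤ m * 2^e := Nat.le_mul_of_pos_right m (Nat.pow_pos (by norm_num))
      have hsplit : ∀ b : ℕ, i₀ < b → (∑ i ∈ Finset.Ico i₀ b, v' i) = x + ∑ i ∈ Finset.Ico (k-j) b, v i := by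
        intro b hb
        rw [Finset.sum_eq_sum_Ico_succ_bot hb]
        congr 1
        · rw [hv']; exact Function.update_self i₀ x v
        · rw [hi₀1]; exact hupd (k-j) b (le_refl _)
      refine ⟨v', e, ?_, ?_, ?_, ?_⟩
      · intro i h1 h2
        rcases eq_or_lt_of_le h1 with h | h
        · rw [hv', ← h]; rw [Function.update_self]; exact hxpos
        · rw [hv', Function.update_of_ne (by omega)]
          exact hpos i (by omega) h2
      · intro a b ha hab hbk
        rcases eq_or_lt_of_le ha with h | h
        · -- a = i₀
          subst h
          rw [hsplit b hab]
          set a' := b - (k - j) with ha'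
          have hb' : k - j + a' = b := by omega
          have hσa : σ a' = ∑ i ∈ Finset.Ico (k-j) b, v i := by
            simp only [hσ]; rw [hb']
          have hdvd2 : 2^e ∣ σ a' := by
            rw [hσa]
            exact dvd_trans (pow_dvd_pow 2 (le_of_lt he2)) (hdvd b hbk)
          have heq2 : (m + σ a' / 2^e) * 2^e = x + σ a' := by
            rw [Nat.add_mul, Nat.div_mul_cancel hdvd2, hx]
          have hgood' := hgood a' (Finset.mem_range.2 (by omega))
          rw [heq2, hσa] at hgood'
          exact hgood'
        · rw [hupd a b (by omega)]
          exact hclique a b (by omega) hab hbk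
      · have hsplitΛ : (k-j)*Λ = i₀*Λ + Λ := by
          have h : k - j = i₀ + 1 := by omega
          rw [h]; ring
        omega
      · intro b hb
        rcases Nat.lt_or_ge i₀ b with h | h
        · rw [hsplit b h]
          apply dvd_add
          · rw [hx]; exact dvd_mul_left (2^e) m
          · exact dvd_trans (pow_dvd_pow 2 (le_of_lt he2)) (hdvd b hb)
        · rw [Finset.Ico_eq_empty (by omega), Finset.sum_empty]
          exact dvd_zero _
  -- use the construction
  obtain ⟨v, E, hpos, hclique, _, _⟩ := CONS k (le_refl k)
  set p : ℕ → ℕ := fun t => ∑ i ∈ Finset.Ico t k, v i with hp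
  have hanti : ∀ t t' : ℕ, t < t' → t' ≤ k → p t' < p t := by
    intro t t' h1 h2
    have hsplit : (∑ i ∈ Finset.Ico t t', v i) + p t' = p t := by
      rw [hp]
      exact Finset.sum_Ico_consecutive _ (le_of_lt h1) h2
    have hsum1 : 1 ≤ ∑ i ∈ Finset.Ico t t', v i := by
      calc 1 ≤ v t := hpos t (by omega) (by omega)
      _ ≤ ∑ i ∈ Finset.Ico t t', v i :=
          Finset.single_le_sum (f := v) (fun i _ => Nat.zero_le _)
            (Finset.mem_Ico.2 ⟨le_refl t, h1⟩)
    omega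
  set P := (Finset.range (k+1)).image p with hP
  have hPcard : P.card = k + 1 := by
    rw [hP, Finset.card_image_of_injOn, Finset.card_range]
    intro t ht t' ht' heq
    by_contra hne
    have htk : t ≤ k := by have := Finset.mem_range.1 (by exact_mod_cast ht); omega
    have htk' : t' ≤ k := by have := Finset.mem_range.1 (by exact_mod_cast ht'); omega
    rcases Nat.lt_or_ge t t' with h | h
    · have := hanti t t' h htk'; omega
    · have h' : t' < t := by omega
      have := hanti t' t h' htk; omega
  have hdiffP : ∀ a ∈ P, ∀ b ∈ P, a < b → ¬ Rich (g (b - a)) := by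
    intro a ha b hb hab
    obtain ⟨t, ht, rfl⟩ := Finset.mem_image.1 ha
    obtain ⟨t', ht', rfl⟩ := Finset.mem_image.1 hb
    have htk : t ≤ k := by have := Finset.mem_range.1 ht; omega
    have htk' : t' ≤ k := by have := Finset.mem_range.1 ht'; omega
    have htt : t' < t := by
      by_contra hco
      push_neg at hco
      rcases eq_or_lt_of_le hco with h | h
      · rw [h] at hab; omega
      · have := hanti t t' h htk'; omega
    have hsplit : (∑ i ∈ Finset.Ico t' t, v i) + p t = p t' := by
      rw [hp]
      exact Finset.sum_Ico_consecutive _ (le_of_lt htt) htk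
    have hdiff : p t' - p t = ∑ i ∈ Finset.Ico t' t, v i := by omega
    rw [hdiff]
    exact hclique t' t (by omega) htt htk
  obtain ⟨c, Wc, hWsub, hWcard, hWmono⟩ := hNram (fun a b => g (b - a)) P (by rw [hPcard]; omega)
  have h2q : 2 ≤ q := le_max_left _ _
  have hpair : ∃ a ∈ Wc, ∃ b ∈ Wc, a < b := by
    have h2card : 1 < Wc.card := by omega
    obtain ⟨a, ha, b, hb, hne⟩ := Finset.one_lt_card.1 h2card
    rcases Nat.lt_or_ge a b with h | h
    · exact ⟨a, ha, b, hb, h⟩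
    · exact ⟨b, hb, a, ha, by omega⟩
  obtain ⟨a, ha, b, hb, hab⟩ := hpair
  have hcpoor : ¬ Rich c := by
    have h1 : g (b - a) = c := hWmono a ha b hb hab
    have h2 : ¬ Rich (g (b - a)) := hdiffP a (hWsub ha) b (hWsub hb) hab
    rwa [h1] at h2
  have hbound := hQf c hcpoor Wc (fun a ha b hb hab => hWmono a ha b hb hab)
  have h3 : Qf c ≤ Finset.univ.sup Qf := Finset.le_sup (Finset.mem_univ c)
  have h4 : Finset.univ.sup Qf ≤ q := le_max_right _ _
  omega

theorem stmt10 (r : ℕ) (C : Fin r → Set ℕ) (hcover : (⋃ i, C i) = Set.univ) :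
    ∃ i, ∃ a b : ℕ, 2 ≤ a ∧ 2 ≤ b ∧ a ∈ C i ∧ b ∈ C i ∧ b ^ a ∈ C i := by
  classical
  have hmem : ∀ n : ℕ, ∃ i, n ∈ C i := by
    intro n
    have : n ∈ ⋃ i, C i := by rw [hcover]; trivial
    exact Set.mem_iUnion.1 this
  choose co hco using hmem
  set g : ℕ → Fin r := fun n => co (2^n) with hg
  have hW : ∃ x y : ℕ, 1 ≤ x ∧ 1 ≤ y ∧ g x = g y ∧ g y = g (y * 2^x) := by
    by_contra hc
    exact keyW g (fun x y hx hy hand => hc ⟨x, y, hx, hy, hand.1, hand.2⟩)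
  obtain ⟨x, y, hx, hy, h1, h2⟩ := hW
  have h2x : 2 ≤ 2^x := by
    calc 2 = 2^1 := by norm_num
    _ ≤ 2^x := Nat.pow_le_pow_right (by norm_num) hx
  have h2y : 2 ≤ 2^y := by
    calc 2 = 2^1 := by norm_num
    _ ≤ 2^y := Nat.pow_le_pow_right (by norm_num) hy
  refine ⟨g y, 2^x, 2^y, h2x, h2y, ?_, ?_, ?_⟩
  · rw [← h1]
    exact hco (2^x)
  · exact hco (2^y)
  · have hpow : (2^y)^(2^x) = 2^(y * 2^x) := (pow_mul 2 y (2^x)).symm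
    rw [hpow, h2]
    exact hco (2^(y * 2^x))

end SahasrabudheProof
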